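/- arXiv:1703.01360 — 3 statements merged into one kernel-verified Lean document; each statement's English description precedes it below -/
import Mathlib

section
/- For any 0 < ε < 1, 0 < δ < 1, κ > 1/2 with δ < κ, and all sufficiently large R > 1, there exists θ ∈ (0,1) such that for every y ∈ ℝ/ℤ and every a ∈ ℝ there is t ∈ R^δ·ℤ ∩ (a, a+R) with dist(y, t·θ mod 1) ≤ ε·R^{κ-1}. -/
open Set

/-- Quantitative ergodic lemma, `d = 1` case: for `0 < ε, δ < 1`, `κ > 1/2`, `δ < κ` and all
sufficiently large `R > 1`, there is `θ ∈ (0,1)` such that for every point `y` of the circle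
`ℝ/ℤ` and every `a ∈ ℝ`, some time `t = R^δ · m ∈ (a, a+R)` satisfies
`dist(y, t·θ) ≤ ε · R^(κ-1)` on the circle. -/
theorem ergodic_lemma_d1 (ε δ κ : ℝ) (hε0 : 0 < ε) (hε1 : ε < 1)
    (hδ0 : 0 < δ) (hδ1 : δ < 1) (hκ : 1 / 2 < κ) (hδκ : δ < κ) :
    ∃ R₀ : ℝ, 1 < R₀ ∧ ∀ R : ℝ, R₀ ≤ R →
      ∃ θ : ℝ, θ ∈ Ioo (0 : ℝ) 1 ∧
        ∀ (y : AddCircle (1 : ℝ)) (a : ℝ), ∃ m : ℤ,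
          R ^ δ * m ∈ Ioo a (a + R) ∧
          dist y ((↑(R ^ δ * m * θ) : AddCircle (1 : ℝ))) ≤ ε * R ^ (κ - 1) := by
  have h1δ : (0:ℝ) < 1 - δ := by linarith
  have hκδ : (0:ℝ) < κ - δ := by linarith
  refine ⟨max (max 2 ((3:ℝ) ^ (1-δ)⁻¹)) ((3/(2*ε)) ^ (κ-δ)⁻¹), ?_, ?_⟩
  · exact lt_of_lt_of_le one_lt_two (le_max_of_le_left (le_max_left _ _))
  intro R hR
  have hR2 : (2:ℝ) ≤ R := le_trans (le_max_of_le_left (le_max_left _ _)) hR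
  have hR1 : (1:ℝ) < R := by linarith
  have hR0 : (0:ℝ) < R := by linarith
  -- key power bounds
  have hA : (3:ℝ) ≤ R ^ (1-δ) := by
    have h := Real.rpow_le_rpow (Real.rpow_nonneg (by norm_num) _)
      (le_trans (le_max_of_le_left (le_max_right _ _)) hR) h1δ.le
    rwa [Real.rpow_inv_rpow (by norm_num) h1δ.ne'] at h
  have hB : (3/(2*ε)) ≤ R ^ (κ-δ) := by
    have h := Real.rpow_le_rpow (Real.rpow_nonneg (by positivity) _)
      (le_trans (le_max_right _ _) hR) hκδ.le
    rwa [Real.rpow_inv_rpow (by positivity) hκδ.ne'] at h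
  set K : ℕ := ⌊R ^ (1-δ)⌋₊ - 1 with hKdef
  have hfloor3 : 3 ≤ ⌊R ^ (1-δ)⌋₊ := Nat.le_floor (by exact_mod_cast hA)
  have hK2 : 2 ≤ K := by omega
  have hK0 : (0:ℝ) < K := by exact_mod_cast Nat.lt_of_lt_of_le (by norm_num) hK2
  have hKle : (K:ℝ) + 1 ≤ R ^ (1-δ) := by
    have : ((K + 1 : ℕ) : ℝ) ≤ R ^ (1-δ) := by
      have h1 : K + 1 = ⌊R ^ (1-δ)⌋₊ := by omega
      rw [h1]; exact Nat.floor_le (by positivity)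
    push_cast at this; linarith
  have hKge : R ^ (1-δ) ≤ 2 * (K:ℝ) := by
    have h2 : R ^ (1-δ) < ⌊R ^ (1-δ)⌋₊ + 1 := Nat.lt_floor_add_one _
    have h3 : ((⌊R ^ (1-δ)⌋₊ : ℝ)) = (K:ℝ) + 1 := by
      have : (⌊R ^ (1-δ)⌋₊ : ℕ) = K + 1 := by omega
      exact_mod_cast congrArg (Nat.cast : ℕ → ℝ) this
    have hK2' : (2:ℝ) ≤ K := by exact_mod_cast hK2
    linarith
  have hRδ0 : (0:ℝ) < R ^ δ := Real.rpow_pos_of_pos hR0 _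
  have hRδ1 : (1:ℝ) < R ^ δ := Real.one_lt_rpow_iff_of_pos hR0 |>.2 (Or.inl ⟨hR1, hδ0⟩)
  have hRκ : (0:ℝ) < R ^ (κ-1) := Real.rpow_pos_of_pos hR0 _
  -- the crucial smallness bound
  have hsmall : 1 / (2 * (K:ℝ)) ≤ ε * R ^ (κ-1) := by
    have hmul : R ^ (κ-1) * R ^ (1-δ) = R ^ (κ-δ) := by
      rw [← Real.rpow_add hR0]; ring_nf
    have h4 : 3 ≤ 2 * ε * R ^ (κ-δ) := by
      rw [div_le_iff₀ (by positivity)] at hB; linarith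
    have h5 : 2 * ε * (R ^ (κ-1) * (2 * K)) ≥ 3 := by
      have := mul_le_mul_of_nonneg_left (mul_le_mul_of_nonneg_left hKge hRκ.le)
        (by positivity : (0:ℝ) ≤ 2 * ε)
      rw [hmul] at this; linarith
    rw [div_le_iff₀ (by positivity)]
    nlinarith [hε0, hRκ, hK0]
  refine ⟨(R ^ δ * K)⁻¹, ⟨by positivity, ?_⟩, ?_⟩
  · rw [inv_lt_one_iff₀]
    right
    nlinarith
  intro y a
  induction y using QuotientAddGroup.induction_on with
  | H x =>
  set j : ℤ := round ((K:ℝ) * x) with hj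
  set m₀ : ℤ := ⌊a / R ^ δ⌋ + 1 with hm₀
  set r : ℤ := (j - m₀) % (K:ℤ) with hr
  have hKZ : (0:ℤ) < (K:ℤ) := by exact_mod_cast Nat.lt_of_lt_of_le (by norm_num) hK2
  have hr0 : 0 ≤ r := Int.emod_nonneg _ hKZ.ne'
  have hrK : r < (K:ℤ) := Int.emod_lt_of_pos _ hKZ
  refine ⟨m₀ + r, ⟨?_, ?_⟩, ?_⟩
  · -- a < R^δ * m
    have h6 : a / R ^ δ < (m₀ : ℝ) := by
      rw [hm₀]; push_cast; exact Int.lt_floor_add_one _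
    have h7 : (m₀:ℝ) ≤ ((m₀ + r : ℤ) : ℝ) := by push_cast; exact_mod_cast by linarith [hr0]
    calc a = (a / R ^ δ) * R ^ δ := by field_simp
    _ < (m₀ : ℝ) * R ^ δ := by exact mul_lt_mul_of_pos_right h6 hRδ0
    _ ≤ ((m₀ + r : ℤ) : ℝ) * R ^ δ := mul_le_mul_of_nonneg_right h7 hRδ0.le
    _ = R ^ δ * ((m₀ + r : ℤ) : ℝ) := mul_comm _ _
  · -- R^δ * m < a + R
    have h8 : ((m₀ + r : ℤ) : ℝ) ≤ a / R ^ δ + K := by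
      have hfl : (⌊a / R ^ δ⌋ : ℝ) ≤ a / R ^ δ := Int.floor_le _
      have hrK' : (r:ℝ) ≤ (K:ℝ) - 1 := by
        have h13 : r + 1 ≤ (K:ℤ) := hrK
        have h14 : (r:ℝ) + 1 ≤ (K:ℝ) := by exact_mod_cast h13
        linarith
      push_cast [hm₀]; linarith
    have h9 : (a / R ^ δ + (K:ℝ)) * R ^ δ < a + R := by
      have h10 : (K:ℝ) * R ^ δ < R := by
        have : ((K:ℝ) + 1) * R ^ δ ≤ R ^ (1-δ) * R ^ δ :=
          mul_le_mul_of_nonneg_right hKle hRδ0.le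
        have hmul : R ^ (1-δ) * R ^ δ = R := by
          rw [← Real.rpow_add hR0]; ring_nf; exact Real.rpow_one R
        nlinarith
      have : a / R ^ δ * R ^ δ = a := by field_simp
      nlinarith
    calc R ^ δ * ((m₀ + r : ℤ) : ℝ) = ((m₀ + r : ℤ) : ℝ) * R ^ δ := mul_comm _ _
    _ ≤ (a / R ^ δ + K) * R ^ δ := mul_le_mul_of_nonneg_right h8 hRδ0.le
    _ < a + R := h9
  · -- the distance bound
    set z : ℤ := (j - m₀) / (K:ℤ) with hz
    have hmz : (m₀ + r : ℤ) = j - (K:ℤ) * z := by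
      have h := Int.emod_add_mul_ediv (j - m₀) (K:ℤ)
      simp only [hr, hz]
      linarith
    have harg : R ^ δ * ((m₀ + r : ℤ) : ℝ) * (R ^ δ * K)⁻¹ = (j:ℝ)/K - z := by
      rw [hmz]
      push_cast
      field_simp
    rw [harg]
    have hcoe : ((((j:ℝ)/K - z : ℝ)) : AddCircle (1:ℝ)) = (((j:ℝ)/K : ℝ) : AddCircle (1:ℝ)) := by
      have : (((z:ℝ)) : AddCircle (1:ℝ)) = 0 := by
        rw [AddCircle.coe_eq_zero_iff]
        exact ⟨z, by simp⟩
      rw [sub_eq_add_neg, QuotientAddGroup.mk_add, QuotientAddGroup.mk_neg, this, neg_zero,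
        add_zero]
    rw [hcoe]
    have hdist : dist ((x:ℝ) : AddCircle (1:ℝ)) (((j:ℝ)/K : ℝ) : AddCircle (1:ℝ))
        = ‖((x - (j:ℝ)/K : ℝ) : AddCircle (1:ℝ))‖ := by
      rw [dist_eq_norm, ← QuotientAddGroup.mk_sub]
    rw [hdist]
    have hnorm : ‖((x - (j:ℝ)/K : ℝ) : AddCircle (1:ℝ))‖ ≤ |x - (j:ℝ)/K| := by
      rw [AddCircle.norm_eq]
      simp only [inv_one, one_mul, mul_one]
      calc |x - (j:ℝ)/K - round (x - (j:ℝ)/K)| ≤ |x - (j:ℝ)/K - (0:ℤ)| :=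
        round_le (x - (j:ℝ)/K) 0
      _ = |x - (j:ℝ)/K| := by simp
    have hround : |x - (j:ℝ)/K| ≤ 1 / (2 * (K:ℝ)) := by
      have h11 : |(K:ℝ) * x - j| ≤ 1/2 := abs_sub_round ((K:ℝ) * x)
      have h12 : x - (j:ℝ)/K = ((K:ℝ) * x - j) / K := by field_simp
      have h15 : 1 / (2 * (K:ℝ)) = (1/2) / K := by ring
      rw [h12, abs_div, abs_of_pos hK0, h15]
      gcongr
    exact hnorm.trans (hround.trans hsmall)
end

section
/- Let 0 < δ < κ < 1. If θ ∈ (0,1) satisfies |θ - 1/R| ≤ R^{-2}, and R is sufficiently large (in particular R^{δ-κ} < ε), then for every y ∈ ℝ/ℤ there exists an integer m with t = R^δ·m ∈ (0, R) and dist(y, t·θ mod 1) ≤ ε·R^{κ-1}. -/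
open Set

lemma dist_mk_le' (a b : ℝ) :
    dist (↑a : AddCircle (1:ℝ)) ↑b ≤ |a - b| := by
  rw [dist_eq_norm]
  have h : ((a : AddCircle (1:ℝ)) - b) = ((a - b : ℝ) : AddCircle (1:ℝ)) := rfl
  rw [h]
  simpa using (QuotientAddGroup.norm_mk_le_norm : ‖((a - b : ℝ) : AddCircle (1:ℝ))‖ ≤ ‖a - b‖)

lemma fract_coe (x : ℝ) : ((Int.fract x : ℝ) : AddCircle (1:ℝ)) = ↑x := by
  rw [← sub_eq_zero]
  have h : ((Int.fract x : ℝ) : AddCircle (1:ℝ)) - ↑x = ((Int.fract x - x : ℝ) : AddCircle (1:ℝ)) := rfl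
  rw [h, AddCircle.coe_eq_zero_iff]
  exact ⟨-⌊x⌋, by simp only [Int.fract, zsmul_eq_mul, mul_one]; push_cast; ring⟩


/-- If `0 < δ < κ < 1`, `θ ∈ (0,1)` satisfies `|θ - 1/R| ≤ R⁻²`, and `R` is sufficiently
large (in particular `R^(δ-κ) < ε`), then for every `y` on the circle `ℝ/ℤ` there is an
integer `m` with `t = R^δ·m ∈ (0, R)` and `dist(y, t·θ) ≤ ε·R^(κ-1)`. -/
theorem circle_equispaced_dense (ε δ κ : ℝ) (hε0 : 0 < ε)
    (hδ0 : 0 < δ) (hδκ : δ < κ) (hκ1 : κ < 1) :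
    ∃ R₀ : ℝ, 1 < R₀ ∧ ∀ R : ℝ, R₀ ≤ R → R ^ (δ - κ) < ε →
      ∀ θ : ℝ, θ ∈ Ioo (0 : ℝ) 1 → |θ - 1 / R| ≤ R ^ (-2 : ℝ) →
        ∀ y : AddCircle (1 : ℝ), ∃ m : ℤ,
          R ^ δ * m ∈ Ioo (0 : ℝ) R ∧
          dist y ((↑(R ^ δ * m * θ) : AddCircle (1 : ℝ))) ≤ ε * R ^ (κ - 1) := by
  refine ⟨max 2 ((2 / ε) ^ (κ - δ)⁻¹), lt_of_lt_of_le one_lt_two (le_max_left _ _), ?_⟩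
  intro R hR _ θ hθ hθR y
  have hR2 : (2 : ℝ) ≤ R := le_trans (le_max_left _ _) hR
  have hR0 : (0 : ℝ) < R := by linarith
  have hR1 : (1 : ℝ) < R := by linarith
  have hkd : (0 : ℝ) < κ - δ := by linarith
  -- exponent arithmetic
  have e1 : R ^ δ * R ^ (1 - δ) = R := by
    rw [← Real.rpow_add hR0]; simpa using Real.rpow_one R
  have ed1 : R ^ δ * R⁻¹ = R ^ (δ - 1) := by
    rw [← Real.rpow_neg_one R, ← Real.rpow_add hR0]; ring_nf
  have ed2 : R ^ δ * (R ^ (-2 : ℝ)) = R ^ (δ - 2) := by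
    rw [← Real.rpow_add hR0]; ring_nf
  have e3 : R ^ (1 - δ) * R ^ (δ - 1) = 1 := by
    rw [← Real.rpow_add hR0]; simpa using Real.rpow_zero R
  have e4 : R ^ (1 - δ) * R ^ (δ - 2) = R⁻¹ := by
    rw [← Real.rpow_add hR0, ← Real.rpow_neg_one R]; ring_nf
  have hd2d1 : R ^ (δ - 2) ≤ R ^ (δ - 1) :=
    Real.rpow_le_rpow_of_exponent_le hR1.le (by linarith)
  have hinvd1 : R⁻¹ ≤ R ^ (δ - 1) := by
    rw [← Real.rpow_neg_one R]
    exact Real.rpow_le_rpow_of_exponent_le hR1.le (by linarith)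
  have hd1pos : (0 : ℝ) < R ^ (δ - 1) := Real.rpow_pos_of_pos hR0 _
  have hd2pos : (0 : ℝ) < R ^ (δ - 2) := Real.rpow_pos_of_pos hR0 _
  -- key bound : 2 * R^(δ-1) ≤ ε * R^(κ-1)
  have hεR : R ^ (δ - κ) ≤ ε / 2 := by
    have h1 : (2 / ε) ^ (κ - δ)⁻¹ ≤ R := le_trans (le_max_right _ _) hR
    have h2 : ((2 / ε) ^ (κ - δ)⁻¹) ^ (κ - δ) ≤ R ^ (κ - δ) :=
      Real.rpow_le_rpow (Real.rpow_nonneg (by positivity) _) h1 hkd.le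
    rw [Real.rpow_inv_rpow (by positivity) hkd.ne'] at h2
    have h3 : R ^ (δ - κ) = (R ^ (κ - δ))⁻¹ := by
      rw [← Real.rpow_neg hR0.le]; ring_nf
    rw [h3]
    have h4 : (0 : ℝ) < 2 / ε := by positivity
    calc (R ^ (κ - δ))⁻¹ ≤ (2 / ε)⁻¹ := by
          apply inv_anti₀ h4 h2
      _ = ε / 2 := by field_simp
  have hmain : 2 * R ^ (δ - 1) ≤ ε * R ^ (κ - 1) := by
    have : R ^ (δ - 1) = R ^ (δ - κ) * R ^ (κ - 1) := by
      rw [← Real.rpow_add hR0]; ring_nf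
    have hk1pos : (0 : ℝ) < R ^ (κ - 1) := Real.rpow_pos_of_pos hR0 _
    nlinarith [mul_le_mul_of_nonneg_right hεR hk1pos.le]
  -- bounds on θ and s
  obtain ⟨hθ0, hθ1⟩ := hθ
  have habs := abs_le.mp hθR
  set s := R ^ δ * θ with hs
  have hδpos : (0 : ℝ) < R ^ δ := Real.rpow_pos_of_pos hR0 _
  have hspos : 0 < s := by positivity
  have hsu : s ≤ R ^ (δ - 1) + R ^ (δ - 2) := by
    have : θ ≤ 1 / R + R ^ (-2 : ℝ) := by linarith [habs.2]
    calc s ≤ R ^ δ * (1 / R + R ^ (-2 : ℝ)) :=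
          mul_le_mul_of_nonneg_left this hδpos.le
      _ = R ^ δ * R⁻¹ + R ^ δ * R ^ (-2 : ℝ) := by ring
      _ = R ^ (δ - 1) + R ^ (δ - 2) := by rw [ed1, ed2]
  have hsl : R ^ (δ - 1) - R ^ (δ - 2) ≤ s := by
    have : 1 / R - R ^ (-2 : ℝ) ≤ θ := by linarith [habs.1]
    calc R ^ (δ - 1) - R ^ (δ - 2) = R ^ δ * R⁻¹ - R ^ δ * R ^ (-2 : ℝ) := by rw [ed1, ed2]
      _ = R ^ δ * (1 / R - R ^ (-2 : ℝ)) := by ring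
      _ ≤ s := mul_le_mul_of_nonneg_left this hδpos.le
  -- the index bound M
  set M : ℤ := ⌈R ^ (1 - δ)⌉ - 1 with hM
  have hx1 : (1 : ℝ) < R ^ (1 - δ) :=
    Real.one_lt_rpow_iff_of_pos hR0 |>.mpr (Or.inl ⟨hR1, by linarith⟩)
  have hM1 : (1 : ℤ) ≤ M := by
    have : (1 : ℤ) < ⌈R ^ (1 - δ)⌉ := Int.lt_ceil.mpr (by exact_mod_cast hx1)
    omega
  have hMlt : (M : ℝ) < R ^ (1 - δ) := by
    have := Int.ceil_lt_add_one (R ^ (1 - δ))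
    push_cast [hM]; linarith
  have hMge : R ^ (1 - δ) - 1 ≤ (M : ℝ) := by
    have := Int.le_ceil (R ^ (1 - δ))
    push_cast [hM]; linarith
  -- representative of y
  induction y using QuotientAddGroup.induction_on with
  | H x =>
  set z := Int.fract x with hz
  have hz0 : 0 ≤ z := Int.fract_nonneg x
  have hz1 : z < 1 := Int.fract_lt_one x
  set k : ℤ := ⌊z / s⌋ + 1 with hk
  have hk1 : (1 : ℤ) ≤ k := by
    have : (0 : ℤ) ≤ ⌊z / s⌋ := Int.floor_nonneg.mpr (by positivity)
    omega
  refine ⟨min M k, ?_, ?_⟩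
  · have hm1R : (1 : ℝ) ≤ ((min M k : ℤ) : ℝ) := by exact_mod_cast le_min hM1 hk1
    have hmMR : ((min M k : ℤ) : ℝ) ≤ (M : ℝ) := by exact_mod_cast min_le_left M k
    constructor
    · nlinarith
    · calc R ^ δ * ((min M k : ℤ) : ℝ) ≤ R ^ δ * (M : ℝ) :=
            mul_le_mul_of_nonneg_left hmMR hδpos.le
        _ < R ^ δ * R ^ (1 - δ) := mul_lt_mul_of_pos_left hMlt hδpos
        _ = R := e1
  · -- distance bound
    have key : |z - ((min M k : ℤ) : ℝ) * s| ≤ 2 * R ^ (δ - 1) := by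
      rcases le_or_gt k M with hkM | hMk
      · rw [min_eq_right hkM]
        have h1 : z / s < (k : ℝ) := by
          rw [hk]; push_cast; exact Int.lt_floor_add_one _
        have h2 : (k : ℝ) ≤ z / s + 1 := by
          rw [hk]; push_cast; linarith [Int.floor_le (z / s)]
        have hzk : z < (k : ℝ) * s := (div_lt_iff₀ hspos).mp h1
        have hks : (k : ℝ) * s ≤ z + s := by
          have h3 := mul_le_mul_of_nonneg_right h2 hspos.le
          rw [add_mul, div_mul_cancel₀ _ hspos.ne', one_mul] at h3
          exact h3
        rw [abs_sub_comm, abs_of_nonneg (by linarith)]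
        linarith
      · rw [min_eq_left hMk.le]
        have hMle : (M : ℝ) ≤ z / s := by
          have h5 : (M : ℤ) ≤ ⌊z / s⌋ := by omega
          exact le_trans (by exact_mod_cast h5) (Int.floor_le _)
        have hMsz : (M : ℝ) * s ≤ z := (le_div_iff₀ hspos).mp hMle
        have hM0 : (0 : ℝ) ≤ (M : ℝ) := by linarith
        have hprod : (R ^ (1 - δ) - 1) * (R ^ (δ - 1) - R ^ (δ - 2)) ≤ (M : ℝ) * s :=
          mul_le_mul hMge hsl (by linarith) hM0
        have hexp : (R ^ (1 - δ) - 1) * (R ^ (δ - 1) - R ^ (δ - 2))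
            = 1 - R⁻¹ - R ^ (δ - 1) + R ^ (δ - 2) := by
          rw [sub_mul, mul_sub, e3, e4]; ring
        rw [abs_of_nonneg (by linarith)]
        linarith
    have hrepr : (↑x : AddCircle (1 : ℝ)) = ↑z := (fract_coe x).symm
    rw [hrepr]
    calc dist (↑z : AddCircle (1:ℝ)) ↑(R ^ δ * ↑(min M k) * θ)
        ≤ |z - R ^ δ * ↑(min M k) * θ| := dist_mk_le' _ _
      _ = |z - ((min M k : ℤ) : ℝ) * s| := by rw [hs]; ring_nf
      _ ≤ 2 * R ^ (δ - 1) := key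
      _ ≤ ε * R ^ (κ - 1) := hmain
end

section
/- Let φ be the Schwartz function on ℝ whose Fourier transform is the indicator of (-ρ, ρ) for a sufficiently small constant ρ > 0, let R > 4, and set u(x₁,t) = (2π)^{-1/2} ∫_ℝ \widehat φ(R^{-1/2}(ξ - πR)) e^{i x₁ ξ - i t ξ²/(2πR)} dξ · R^{-1/2}. Then there exist absolute constants c, C > 0 (independent of R) such that c ≤ |u(x₁,t)| ≤ C whenever |t| ≤ 1 and |x₁ - t| ≤ R^{-1/2}. -/
open Real Set

/-- The solution `u(x₁,t) = (2π)^{-1/2} R^{-1/2} ∫ φ̂(R^{-1/2}(ξ-πR)) e^{i x₁ ξ - i t ξ²/(2πR)} dξ`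
with `φ̂ = χ_{(-ρ,ρ)}`. -/
noncomputable def dkSol (ρ R x₁ t : ℝ) : ℂ :=
  (((2 * Real.pi) ^ (-(1 / 2 : ℝ)) * R ^ (-(1 / 2 : ℝ)) : ℝ) : ℂ) *
    ∫ ξ : ℝ, (Set.Ioo (-ρ) ρ).indicator (fun _ => (1 : ℂ)) (R ^ (-(1 / 2 : ℝ)) * (ξ - Real.pi * R))
      * Complex.exp (Complex.I * ((x₁ * ξ - t * ξ ^ 2 / (2 * Real.pi * R) : ℝ) : ℂ))

open MeasureTheory in
theorem dkSol_key (ρ R x₁ t : ℝ) (hρ : 0 < ρ) (hρ' : ρ ≤ 1/2) (hR : 4 < R) (ht : |t| ≤ 1)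
    (hx : |x₁ - t| ≤ R ^ (-(1/2 : ℝ))) :
    (2*π) ^ (-(1/2:ℝ)) * ρ ≤ ‖dkSol ρ R x₁ t‖ ∧ ‖dkSol ρ R x₁ t‖ ≤ 2 * ρ := by
  have hR0 : (0:ℝ) < R := by linarith
  have hπ : (0:ℝ) < π := Real.pi_pos
  set r : ℝ := R ^ ((1/2:ℝ)) with hrdef
  have hr : 0 < r := Real.rpow_pos_of_pos hR0 _
  have hinv : R ^ (-(1/2:ℝ)) = r⁻¹ := Real.rpow_neg hR0.le _
  have hrr : r * r = R := by
    rw [hrdef, ← Real.rpow_add hR0]; norm_num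
  set a : ℝ := π*R - ρ*r with hadef
  set b : ℝ := π*R + ρ*r with hbdef
  have hab : a < b := by have := mul_pos hρ hr; simp only [hadef, hbdef]; linarith
  have hvol : volume (Ioo a b) = ENNReal.ofReal (2*(ρ*r)) := by
    rw [Real.volume_Ioo]; congr 1; simp [hadef, hbdef]; ring
  have hvolfin : volume (Ioo a b) < ⊤ := by rw [hvol]; exact ENNReal.ofReal_lt_top
  -- step 1: rewrite the integral
  have h1 : (∫ ξ : ℝ, (Set.Ioo (-ρ) ρ).indicator (fun _ => (1 : ℂ)) (R ^ (-(1 / 2 : ℝ)) * (ξ - Real.pi * R))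
      * Complex.exp (Complex.I * ((x₁ * ξ - t * ξ ^ 2 / (2 * Real.pi * R) : ℝ) : ℂ)))
      = ∫ ξ in Ioo a b, Complex.exp (Complex.I * ((x₁ * ξ - t * ξ ^ 2 / (2 * Real.pi * R) : ℝ) : ℂ)) := by
    rw [← MeasureTheory.integral_indicator measurableSet_Ioo]
    congr 1; funext ξ
    have hmem : (R ^ (-(1/2:ℝ)) * (ξ - π*R) ∈ Ioo (-ρ) ρ) ↔ ξ ∈ Ioo a b := by
      have hd : R ^ (-(1/2:ℝ)) * (ξ - π*R) = (ξ - π*R)/r := by rw [hinv, inv_mul_eq_div]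
      rw [hd]
      simp only [Set.mem_Ioo, div_lt_iff₀ hr, lt_div_iff₀ hr, hadef, hbdef]
      constructor <;> rintro ⟨h₁, h₂⟩ <;> constructor <;> nlinarith
    by_cases h : ξ ∈ Ioo a b
    · rw [Set.indicator_of_mem h, Set.indicator_of_mem (hmem.mpr h), one_mul]
    · rw [Set.indicator_of_notMem h, Set.indicator_of_notMem (fun hc => h (hmem.mp hc)), zero_mul]
  set J : ℂ := ∫ ξ in Ioo a b, Complex.exp (Complex.I * ((x₁ * ξ - t * ξ ^ 2 / (2 * Real.pi * R) : ℝ) : ℂ)) with hJ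
  have hnorm : ‖dkSol ρ R x₁ t‖ = (2*π) ^ (-(1/2:ℝ)) * r⁻¹ * ‖J‖ := by
    rw [dkSol, h1, norm_mul, Complex.norm_real, hinv, Real.norm_eq_abs,
      abs_of_nonneg (by positivity)]
  have hone : ∀ x : ℝ, ‖Complex.exp (Complex.I * (x:ℂ))‖ = 1 := by
    intro x
    rw [Complex.norm_exp]
    simp
  -- upper bound
  have hup : ‖J‖ ≤ 2 * (ρ * r) := by
    calc ‖J‖ ≤ 1 * (volume (Ioo a b)).toReal := by
          apply MeasureTheory.norm_setIntegral_le_of_norm_le_const hvolfin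
          intro x _; rw [hone]
      _ = 2 * (ρ * r) := by rw [hvol, one_mul, ENNReal.toReal_ofReal (by positivity)]
  have hub : ‖dkSol ρ R x₁ t‖ ≤ 2 * ρ := by
    rw [hnorm]
    have h2π : (2*π) ^ (-(1/2:ℝ)) ≤ 1 :=
      Real.rpow_le_one_of_one_le_of_nonpos (by linarith [Real.pi_gt_three]) (by norm_num)
    calc (2*π) ^ (-(1/2:ℝ)) * r⁻¹ * ‖J‖ ≤ 1 * r⁻¹ * (2*(ρ*r)) := by
          apply mul_le_mul (by apply mul_le_mul_of_nonneg_right h2π (by positivity)) hup (norm_nonneg _)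
          positivity
      _ = 2 * ρ * (r⁻¹ * r) := by ring
      _ = 2 * ρ := by rw [inv_mul_cancel₀ hr.ne', mul_one]
  refine ⟨?_, hub⟩
  -- lower bound
  set c0 : ℝ := π*R*x₁ - t*π*R/2 with hc0
  set φ : ℝ → ℝ := fun ξ => (x₁ - t)*(ξ - π*R) - t*(ξ - π*R)^2/(2*π*R) with hφ
  have hphase : ∀ ξ : ℝ, x₁ * ξ - t * ξ^2 / (2*π*R) = φ ξ + c0 := by
    intro ξ; rw [hφ, hc0]; field_simp; ring
  have hφbd : ∀ ξ ∈ Ioo a b, |φ ξ| ≤ 1 := by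
    intro ξ hξ
    have h2 : |ξ - π*R| ≤ ρ * r := by
      rw [abs_le]; simp only [mem_Ioo, hadef, hbdef] at hξ
      constructor <;> linarith [hξ.1, hξ.2]
    have h2' : 0 ≤ |ξ - π*R| := abs_nonneg _
    have hx' : |x₁ - t| ≤ r⁻¹ := by rwa [hinv] at hx
    have e1 : |(x₁ - t)*(ξ - π*R)| ≤ ρ := by
      rw [abs_mul]
      calc |x₁ - t| * |ξ - π*R| ≤ r⁻¹ * (ρ * r) :=
            mul_le_mul hx' h2 h2' (by positivity)
        _ = ρ * (r⁻¹ * r) := by ring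
        _ = ρ := by rw [inv_mul_cancel₀ hr.ne', mul_one]
    have e2 : |t*(ξ - π*R)^2/(2*π*R)| ≤ ρ^2 := by
      rw [abs_div, abs_of_pos (by positivity : (0:ℝ) < 2*π*R), abs_mul,
        abs_of_nonneg (sq_nonneg (ξ - π*R)), div_le_iff₀ (by positivity)]
      have h3 : (ξ - π*R)^2 ≤ ρ^2 * R := by
        have hsq : (ξ - π*R)^2 ≤ (ρ*r)^2 := by
          rw [← sq_abs]
          exact pow_le_pow_left₀ h2' h2 2
        calc (ξ - π*R)^2 ≤ (ρ*r)^2 := hsq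
          _ = ρ^2 * R := by rw [mul_pow, pow_two r, hrr]
      have hint1 : 0 ≤ (1 - |t|) * (ξ - π*R)^2 :=
        mul_nonneg (by linarith) (sq_nonneg _)
      have hint2 : 0 ≤ ρ^2 * ((2*π - 1) * R) :=
        mul_nonneg (sq_nonneg _) (mul_nonneg (by linarith [Real.pi_gt_three]) hR0.le)
      linarith [hint1, hint2, h3]
    calc |φ ξ| ≤ |(x₁ - t)*(ξ - π*R)| + |t*(ξ - π*R)^2/(2*π*R)| := abs_sub _ _
      _ ≤ ρ + ρ^2 := add_le_add e1 e2
      _ ≤ 1 := by nlinarith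
  -- integrability
  have hcontφ : Continuous φ := by fun_prop
  have hcont : Continuous (fun ξ : ℝ => Complex.exp (Complex.I * ((φ ξ : ℝ) : ℂ))) := by
    fun_prop
  have hint : IntegrableOn (fun ξ : ℝ => Complex.exp (Complex.I * ((φ ξ : ℝ) : ℂ))) (Ioo a b) :=
    (hcont.integrableOn_Icc).mono_set Ioo_subset_Icc_self
  -- J with shifted phase
  have hJ2 : ‖J‖ = ‖∫ ξ in Ioo a b, Complex.exp (Complex.I * ((φ ξ : ℝ) : ℂ))‖ := by
    have : Complex.exp (-(Complex.I * (c0:ℂ))) * J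
        = ∫ ξ in Ioo a b, Complex.exp (Complex.I * ((φ ξ : ℝ) : ℂ)) := by
      rw [hJ, ← MeasureTheory.integral_const_mul]
      congr 1; funext ξ
      rw [← Complex.exp_add]
      congr 1
      rw [hphase ξ]
      push_cast
      ring
    have hw : ‖Complex.exp (-(Complex.I * (c0:ℂ)))‖ = 1 := by
      rw [Complex.norm_exp]; simp
    rw [← this, norm_mul, hw, one_mul]
  have hre : (∫ ξ in Ioo a b, Complex.exp (Complex.I * ((φ ξ : ℝ) : ℂ))).re
      = ∫ ξ in Ioo a b, Real.cos (φ ξ) := by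
    have h := integral_re hint
    simp only [RCLike.re_to_complex] at h
    rw [← h]
    congr 1; funext ξ
    rw [mul_comm, Complex.exp_ofReal_mul_I_re]
  have hcosint : IntegrableOn (fun ξ => Real.cos (φ ξ)) (Ioo a b) :=
    ((Real.continuous_cos.comp hcontφ).integrableOn_Icc).mono_set Ioo_subset_Icc_self
  have hlowint : ρ * r ≤ ∫ ξ in Ioo a b, Real.cos (φ ξ) := by
    have hconst : (∫ _ξ in Ioo a b, (1/2 : ℝ)) = ρ * r := by
      rw [setIntegral_const, measureReal_def, hvol, ENNReal.toReal_ofReal (by positivity), smul_eq_mul]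
      ring
    rw [← hconst]
    have hhalf : IntegrableOn (fun _ : ℝ => (1/2:ℝ)) (Ioo a b) :=
      integrableOn_const hvolfin.ne
    apply setIntegral_mono_on hhalf hcosint measurableSet_Ioo
    intro ξ hξ
    have h1 := hφbd ξ hξ
    show (1/2:ℝ) ≤ Real.cos (φ ξ)
    generalize φ ξ = y at h1 ⊢
    have h2 : y^2 ≤ 1 := by
      rw [← sq_abs, ← one_pow 2]
      exact pow_le_pow_left₀ (abs_nonneg _) h1 2
    linarith [Real.one_sub_sq_div_two_le_cos (x := y)]
  have hJlow : ρ * r ≤ ‖J‖ := by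
    rw [hJ2]
    calc ρ * r ≤ (∫ ξ in Ioo a b, Complex.exp (Complex.I * ((φ ξ : ℝ) : ℂ))).re := by
          rw [hre]; exact hlowint
      _ ≤ ‖∫ ξ in Ioo a b, Complex.exp (Complex.I * ((φ ξ : ℝ) : ℂ))‖ := Complex.re_le_norm _
  rw [hnorm]
  calc (2*π) ^ (-(1/2:ℝ)) * ρ = (2*π) ^ (-(1/2:ℝ)) * r⁻¹ * (ρ * r) := by
        field_simp
    _ ≤ (2*π) ^ (-(1/2:ℝ)) * r⁻¹ * ‖J‖ := by
        apply mul_le_mul_of_nonneg_left hJlow (by positivity)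

/-- Dahlberg–Kenig computation: for `ρ` a sufficiently small constant there are constants
`c, C > 0` independent of `R` such that `c ≤ |u(x₁,t)| ≤ C` whenever `R > 4`, `|t| ≤ 1` and
`|x₁ - t| ≤ R^{-1/2}`. -/
theorem dkSol_size : ∃ ρ₀ : ℝ, 0 < ρ₀ ∧ ∀ ρ : ℝ, 0 < ρ → ρ ≤ ρ₀ →
    ∃ c C : ℝ, 0 < c ∧ 0 < C ∧ ∀ R x₁ t : ℝ, 4 < R → |t| ≤ 1 → |x₁ - t| ≤ R ^ (-(1 / 2 : ℝ)) →
      c ≤ ‖dkSol ρ R x₁ t‖ ∧ ‖dkSol ρ R x₁ t‖ ≤ C := by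
  refine ⟨1/2, by norm_num, fun ρ hρ hρ' => ⟨(2*π) ^ (-(1/2:ℝ)) * ρ, 2*ρ, by positivity,
    by positivity, fun R x₁ t hR ht hx => dkSol_key ρ R x₁ t hρ hρ' hR ht hx⟩⟩
end
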